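/- For positive integers k, l and integer h with min(k,l) ≤ h < max(k,l), one has σ_{k,l}(h) = σ_{k,l}(s) + ((h−s)/2)·min(k,l), where s = min(k,l)−2 if h−min(k,l) is even and s = min(k,l)−1 otherwise. -/
import Mathlib


/-- σ_{k,l}(h): number of points (u,v) with rows u ∈ [0,l), columns v ∈ [0,k),
reachable from (0,h): 0 ≤ u ≤ h−v and u ≡ h−v (mod 2). -/
def sigmaF (k l : ℕ) (h : ℤ) : ℕ :=
  ((Finset.range l ×ˢ Finset.range k).filter
    (fun p => (p.1 : ℤ) ≤ h - p.2 ∧ (p.1 : ℤ) % 2 = (h - p.2) % 2)).card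

lemma sigmaF_eq (k l : ℕ) (h : ℤ) :
    sigmaF k l h = ((Finset.range l ×ˢ Finset.range k).filter
      (fun p => ((p.1 : ℤ) + p.2) ≤ h ∧ ((p.1 : ℤ) + p.2) % 2 = h % 2)).card := by
  unfold sigmaF
  congr 1
  apply Finset.filter_congr
  intro p _
  constructor <;> intro ⟨a, b⟩ <;> exact ⟨by omega, by omega⟩

lemma diag_card (k l : ℕ) (h : ℤ) (h1 : (min k l : ℤ) ≤ h) (h2 : h < (max k l : ℤ)) :
    ((Finset.range l ×ˢ Finset.range k).filter
      (fun p => ((p.1 : ℤ) + p.2) = h)).card = min k l := by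
  have h0 : 0 ≤ h := le_trans (by positivity) h1
  obtain ⟨n, rfl⟩ := Int.eq_ofNat_of_zero_le h0
  rcases le_total k l with hkl | hkl
  · have hkn : k ≤ n := by omega
    have hnl : n < l := by omega
    have heq : (Finset.range l ×ˢ Finset.range k).filter
        (fun p => ((p.1 : ℤ) + p.2) = (n : ℤ)) =
        (Finset.range k).image (fun v => (n - v, v)) := by
      ext ⟨u, v⟩
      simp only [Finset.mem_filter, Finset.mem_product, Finset.mem_range,
        Finset.mem_image, Prod.mk.injEq]
      constructor
      · rintro ⟨⟨hu, hv⟩, huv⟩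
        exact ⟨v, hv, by omega, rfl⟩
      · rintro ⟨w, hw, ha, hb⟩
        subst hb; refine ⟨⟨by omega, hw⟩, by push_cast; omega⟩
    rw [heq, Finset.card_image_of_injective _
      (fun a b hab => (Prod.mk.injEq _ _ _ _ ▸ hab).2), Finset.card_range,
      min_eq_left hkl]
  · have hln : l ≤ n := by omega
    have hnk : n < k := by omega
    have heq : (Finset.range l ×ˢ Finset.range k).filter
        (fun p => ((p.1 : ℤ) + p.2) = (n : ℤ)) =
        (Finset.range l).image (fun u => (u, n - u)) := by
      ext ⟨u, v⟩
      simp only [Finset.mem_filter, Finset.mem_product, Finset.mem_range,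
        Finset.mem_image, Prod.mk.injEq]
      constructor
      · rintro ⟨⟨hu, hv⟩, huv⟩
        exact ⟨u, hu, rfl, by omega⟩
      · rintro ⟨w, hw, ha, hb⟩
        subst ha; subst hb; refine ⟨⟨hw, by omega⟩, by push_cast; omega⟩
    rw [heq, Finset.card_image_of_injective _
      (fun a b hab => (Prod.mk.injEq _ _ _ _ ▸ hab).1), Finset.card_range,
      min_eq_right hkl]

lemma sigmaF_step (k l : ℕ) (h : ℤ) (h1 : (min k l : ℤ) ≤ h) (h2 : h < (max k l : ℤ)) :
    sigmaF k l h = sigmaF k l (h - 2) + min k l := by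
  rw [sigmaF_eq, sigmaF_eq]
  set S := Finset.range l ×ˢ Finset.range k
  set A := S.filter (fun p => ((p.1 : ℤ) + p.2) ≤ h ∧ ((p.1 : ℤ) + p.2) % 2 = h % 2) with hA
  set B := S.filter (fun p => ((p.1 : ℤ) + p.2) ≤ h - 2 ∧ ((p.1 : ℤ) + p.2) % 2 = (h - 2) % 2)
    with hB
  have hBA : B ⊆ A := by
    intro p hp
    simp only [hA, hB, Finset.mem_filter] at hp ⊢
    exact ⟨hp.1, by omega, by omega⟩
  have hdiff : A \ B = S.filter (fun p => ((p.1 : ℤ) + p.2) = h) := by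
    ext p
    simp only [hA, hB, Finset.mem_sdiff, Finset.mem_filter]
    constructor
    · rintro ⟨⟨hS, ha, hb⟩, hn⟩
      refine ⟨hS, ?_⟩
      by_contra hne
      exact hn ⟨hS, by omega, by omega⟩
    · rintro ⟨hS, heq⟩
      refine ⟨⟨hS, by omega, by omega⟩, fun hmem => ?_⟩
      obtain ⟨-, hc, hd⟩ := hmem
      omega
  have hcs := Finset.card_sdiff_of_subset hBA
  rw [hdiff, diag_card k l h h1 h2] at hcs
  have hle := Finset.card_le_card hBA
  omega

lemma sigmaF_iter (k l : ℕ) (s : ℤ) (hs : (min k l : ℤ) - 2 ≤ s) :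
    ∀ n : ℕ, s + 2 * (n : ℤ) < (max k l : ℤ) →
      (sigmaF k l (s + 2 * n) : ℤ) = sigmaF k l s + n * min k l := by
  intro n
  induction n with
  | zero => intro _; simp
  | succ m ih =>
    intro hlt
    have hmin : (min k l : ℤ) ≤ s + 2 * ((m + 1 : ℕ) : ℤ) := by push_cast; omega
    have hstep := sigmaF_step k l (s + 2 * ((m + 1 : ℕ) : ℤ)) hmin hlt
    have he : s + 2 * ((m + 1 : ℕ) : ℤ) - 2 = s + 2 * (m : ℤ) := by push_cast; ring
    rw [he] at hstep
    have ihm := ih (by push_cast at hlt ⊢; omega)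
    have hstep' : (sigmaF k l (s + 2 * ((m + 1 : ℕ) : ℤ)) : ℤ)
        = (sigmaF k l (s + 2 * (m : ℤ)) : ℤ) + ((min k l : ℕ) : ℤ) := by exact_mod_cast hstep
    rw [hstep', ihm]
    push_cast [Nat.cast_min]
    ring

lemma final_aux (k l : ℕ) (h s : ℤ) (hs2 : (min k l : ℤ) - 2 ≤ s) (hge : s + 2 ≤ h)
    (hdvd : 2 ∣ h - s) (h2 : h < (max k l : ℤ)) :
    (sigmaF k l h : ℤ) = sigmaF k l s + ((h - s) / 2) * min (k : ℤ) l := by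
  obtain ⟨c, hc⟩ := hdvd
  have hc0 : 0 ≤ c := by omega
  obtain ⟨n, rfl⟩ := Int.eq_ofNat_of_zero_le hc0
  have hh : h = s + 2 * (n : ℤ) := by omega
  have hq : (h - s) / 2 = (n : ℤ) := by omega
  rw [hq, hh, sigmaF_iter k l s hs2 n (by omega)]
  push_cast
  ring

theorem stmt1 (k l : ℕ) (hk : 0 < k) (hl : 0 < l) (h : ℤ)
    (h1 : (min k l : ℤ) ≤ h) (h2 : h < (max k l : ℤ)) :
    (sigmaF k l h : ℤ) =
      sigmaF k l (if Even (h - min k l) then (min k l : ℤ) - 2 else (min k l : ℤ) - 1) +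
        ((h - (if Even (h - min k l) then (min k l : ℤ) - 2 else (min k l : ℤ) - 1)) / 2) *
          min k l := by
  simp only [Nat.cast_min]
  by_cases hpar : Even (h - (min (k : ℤ) l))
  · rw [if_pos hpar]
    rw [Int.even_iff] at hpar
    exact final_aux k l h _ (by omega) (by omega) (by omega) h2
  · rw [if_neg hpar]
    rw [Int.even_iff] at hpar
    exact final_aux k l h _ (by omega) (by omega) (by omega) h2
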